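/- Let {w_k} have correlation bound Γ_w ≻ 0 for A, let Γ_{k+1} = A Γ_k Aᵀ + Γ_w with Γ_0 = 0, and define sets ℛ_0 = {0}, ℛ_{k+1} = A·ℛ_k + 𝔹(Γ_w, r) for r > 0. Then 𝔹(Γ_k, r) ⊆ ℛ_k for all k ≥ 1. -/

import Mathlib

open Matrix MeasureTheory Pointwise

/-- The matrix of expectations `E[z wᵀ]`, entrywise. -/
noncomputable def covE {n : ℕ} {Ω : Type*} [MeasurableSpace Ω] (μ : Measure Ω)
    (z w : Ω → Fin n → ℝ) : Matrix (Fin n) (Fin n) ℝ :=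
  Matrix.of fun i j => ∫ ω, z ω i * w ω j ∂μ

/-- The Loewner order on real matrices: `A ⪯ B` iff `B - A` is positive semidefinite. -/
def LoeLE {n : ℕ} (A B : Matrix (Fin n) (Fin n) ℝ) : Prop := (B - A).PosSemidef

/-- The square root of a positive semidefinite matrix, as defined in the older Mathlib
(`Matrix.PosSemidef.sqrt`, removed since). -/
noncomputable def Matrix.PosSemidef.sqrt {n : ℕ} {Γ : Matrix (Fin n) (Fin n) ℝ}
    (hA : Γ.PosSemidef) : Matrix (Fin n) (Fin n) ℝ :=
  hA.1.eigenvectorUnitary.1 * diagonal ((↑) ∘ (√·) ∘ hA.1.eigenvalues) *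
    (star hA.1.eigenvectorUnitary : Matrix (Fin n) (Fin n) ℝ)

lemma Matrix.PosSemidef.posSemidef_sqrt {n : ℕ} {Γ : Matrix (Fin n) (Fin n) ℝ}
    (hA : Γ.PosSemidef) : hA.sqrt.PosSemidef := by
  unfold Matrix.PosSemidef.sqrt
  have hD : (diagonal ((↑) ∘ (√·) ∘ hA.1.eigenvalues) : Matrix (Fin n) (Fin n) ℝ).PosSemidef := by
    rw [posSemidef_diagonal_iff]
    intro i
    exact Real.sqrt_nonneg _
  exact hD.mul_mul_conjTranspose_same _

lemma Matrix.PosSemidef.sqrt_mul_self {n : ℕ} {Γ : Matrix (Fin n) (Fin n) ℝ}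
    (hA : Γ.PosSemidef) : hA.sqrt * hA.sqrt = Γ := by
  unfold Matrix.PosSemidef.sqrt
  set U := hA.1.eigenvectorUnitary
  have hU : (star U : Matrix (Fin n) (Fin n) ℝ) * U.1 = 1 := Matrix.UnitaryGroup.star_mul_self U
  have hDD : (diagonal ((↑) ∘ (√·) ∘ hA.1.eigenvalues) : Matrix (Fin n) (Fin n) ℝ) *
      diagonal ((↑) ∘ (√·) ∘ hA.1.eigenvalues) = diagonal (RCLike.ofReal ∘ hA.1.eigenvalues) := by
    rw [diagonal_mul_diagonal]
    congr 1
    funext i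
    simp [Real.mul_self_sqrt (hA.eigenvalues_nonneg i)]
  conv_rhs => rw [hA.1.spectral_theorem]
  rw [Unitary.conjStarAlgAut_apply, ← hDD]
  simp only [Matrix.mul_assoc]
  rw [← Matrix.mul_assoc (star (U : Matrix (Fin n) (Fin n) ℝ)) U.1, hU, Matrix.one_mul]

/-- The ellipsoid `𝔹(Γ, r) = {x = Γ^{1/2} z : zᵀ z ≤ r}` for a PSD matrix `Γ`. -/
noncomputable def ball {n : ℕ} (Γ : Matrix (Fin n) (Fin n) ℝ)
    (hΓ : Γ.PosSemidef) (r : ℝ) : Set (Fin n → ℝ) :=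
  {x | ∃ z : Fin n → ℝ, x = hΓ.sqrt *ᵥ z ∧ z ⬝ᵥ z ≤ r}

lemma dot_self_nonneg {n : ℕ} (v : Fin n → ℝ) : 0 ≤ v ⬝ᵥ v :=
  Finset.sum_nonneg fun _ _ => mul_self_nonneg _

lemma dot_mulVec_self {n : ℕ} (N : Matrix (Fin n) (Fin n) ℝ) (y : Fin n → ℝ) :
    (N *ᵥ y) ⬝ᵥ (N *ᵥ y) = y ⬝ᵥ ((Nᵀ * N) *ᵥ y) := by
  rw [← mulVec_mulVec, mulVec_transpose, dotProduct_mulVec]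
  exact dotProduct_comm _ _

lemma ballCongr8 {n : ℕ} {Γ Γ' : Matrix (Fin n) (Fin n) ℝ} (h : Γ = Γ')
    (hΓ : Γ.PosSemidef) (hΓ' : Γ'.PosSemidef) (r : ℝ) :
    ball Γ hΓ r = ball Γ' hΓ' r := by subst h; rfl

lemma key {n : ℕ} (A Γ W : Matrix (Fin n) (Fin n) ℝ) (hΓ : Γ.PosSemidef) (hW : W.PosDef)
    (hM : (A * Γ * Aᵀ + W).PosSemidef) (r : ℝ) (hr : 0 ≤ r) :
    ball (A * Γ * Aᵀ + W) hM r ⊆ (A *ᵥ ·) '' ball Γ hΓ r + ball W hW.posSemidef r := by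
  set M := A * Γ * Aᵀ + W with hMdef
  have hMpd : M.PosDef := Matrix.PosDef.posSemidef_add (hΓ.mul_mul_conjTranspose_same A) hW
  set S := hM.sqrt with hSdef
  have hSS : S * S = M := hM.sqrt_mul_self
  have hSt : Sᵀ = S := hM.posSemidef_sqrt.1
  have hSdet : IsUnit S.det := by
    have h2 : S.det * S.det = M.det := by rw [← det_mul, hSS]
    have : S.det ≠ 0 := by
      intro h0
      rw [h0, mul_zero] at h2
      exact hMpd.det_pos.ne' h2.symm
    exact this.isUnit
  set B := hΓ.sqrt with hBdef
  set T := hW.posSemidef.sqrt with hTdef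
  have hBB : B * B = Γ := hΓ.sqrt_mul_self
  have hTT : T * T = W := hW.posSemidef.sqrt_mul_self
  have hBt : Bᵀ = B := hΓ.posSemidef_sqrt.1
  have hTt : Tᵀ = T := hW.posSemidef.posSemidef_sqrt.1
  rintro x ⟨u, rfl, hu⟩
  set y := S⁻¹ *ᵥ u with hydef
  set z₁ := (B * Aᵀ) *ᵥ y with hz1
  set z₂ := T *ᵥ y with hz2
  -- sum of norms
  have hsum : z₁ ⬝ᵥ z₁ + z₂ ⬝ᵥ z₂ = u ⬝ᵥ u := by
    rw [hz1, hz2, dot_mulVec_self, dot_mulVec_self, ← dotProduct_add, ← add_mulVec]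
    have hq : (B * Aᵀ)ᵀ * (B * Aᵀ) + Tᵀ * T = M := by
      rw [transpose_mul, hBt, hTt, transpose_transpose, hMdef, ← hBB, ← hTT]
      simp [mul_assoc]
    rw [hq, hydef, mulVec_mulVec, ← hSS]
    have : S * S * S⁻¹ = S := by
      rw [mul_assoc, Matrix.mul_nonsing_inv _ hSdet, mul_one]
    rw [this, dotProduct_mulVec, ← mulVec_transpose, hSt, mulVec_mulVec,
      Matrix.mul_nonsing_inv _ hSdet, one_mulVec]
  have h1 : z₁ ⬝ᵥ z₁ ≤ r :=
    le_trans (by nlinarith [dot_self_nonneg z₂]) hu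
  have h2 : z₂ ⬝ᵥ z₂ ≤ r :=
    le_trans (by nlinarith [dot_self_nonneg z₁]) hu
  have hx : S *ᵥ u = A *ᵥ (B *ᵥ z₁) + T *ᵥ z₂ := by
    show S *ᵥ u = A *ᵥ (B *ᵥ ((B * Aᵀ) *ᵥ (S⁻¹ *ᵥ u))) + T *ᵥ (T *ᵥ (S⁻¹ *ᵥ u))
    simp only [mulVec_mulVec]
    rw [← add_mulVec]
    have hMS : (A * Γ * Aᵀ + W) * S⁻¹ = S := by
      rw [← hMdef, ← hSS, mul_assoc, Matrix.mul_nonsing_inv _ hSdet, mul_one]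
    have key2 : A * (B * (B * Aᵀ * S⁻¹)) + T * (T * S⁻¹) = S := by
      calc A * (B * (B * Aᵀ * S⁻¹)) + T * (T * S⁻¹)
          = (A * Γ * Aᵀ + W) * S⁻¹ := by
            rw [← hBB, ← hTT]
            simp only [Matrix.add_mul, Matrix.mul_assoc]
        _ = S := hMS
    rw [key2]
  rw [Set.mem_add]
  exact ⟨A *ᵥ (B *ᵥ z₁), ⟨B *ᵥ z₁, ⟨z₁, rfl, h1⟩, rfl⟩, T *ᵥ z₂, ⟨z₂, rfl, h2⟩, hx.symm⟩


lemma stmt8_main {n : ℕ} (A Γw : Matrix (Fin n) (Fin n) ℝ) (hΓw : Γw.PosDef)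
    (Γ : ℕ → Matrix (Fin n) (Fin n) ℝ)
    (hΓ0 : Γ 0 = 0) (hΓrec : ∀ k, Γ (k + 1) = A * Γ k * Aᵀ + Γw)
    (hΓpsd : ∀ k, (Γ k).PosSemidef)
    (r : ℝ) (hr : 0 < r)
    (R : ℕ → Set (Fin n → ℝ))
    (hR0 : R 0 = {0})
    (hRrec : ∀ k, R (k + 1) = (A *ᵥ ·) '' R k + ball Γw hΓw.posSemidef r) :
    ∀ k, 1 ≤ k → ball (Γ k) (hΓpsd k) r ⊆ R k := by
  intro k
  induction k with
  | zero => omega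
  | succ k ih =>
    intro _
    rcases Nat.eq_zero_or_pos k with hk0 | hk1
    · subst hk0
      have hΓ1 : Γ 1 = Γw := by rw [hΓrec 0, hΓ0]; simp
      rw [ballCongr8 hΓ1 (hΓpsd 1) hΓw.posSemidef r, hRrec 0, hR0]
      intro x hx
      rw [Set.mem_add]
      exact ⟨A *ᵥ 0, ⟨0, rfl, rfl⟩, x, hx, by simp⟩
    · rw [ballCongr8 (hΓrec k) (hΓpsd (k + 1))
        (by rw [← hΓrec k]; exact hΓpsd (k + 1)) r, hRrec k]
      refine (key A (Γ k) Γw (hΓpsd k) hΓw _ r hr.le).trans ?_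
      exact Set.add_subset_add_right (Set.image_mono (ih hk1))

/-- with a correlation bound `Γ_w ≻ 0`, `Γ_{k+1} = A Γ_k Aᵀ + Γ_w`, `Γ_0 = 0`,
`ℛ_0 = {0}` and `ℛ_{k+1} = A ℛ_k + 𝔹(Γ_w, r)`, one has `𝔹(Γ_k, r) ⊆ ℛ_k` for `k ≥ 1`. -/
theorem stmt_8 {n : ℕ} {Ω : Type*} [MeasurableSpace Ω] (μ : Measure Ω)
    [IsProbabilityMeasure μ]
    (A Γw : Matrix (Fin n) (Fin n) ℝ) (hΓw : Γw.PosDef)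
    (w z : ℕ → Ω → Fin n → ℝ)
    (hz0 : ∀ ω, z 0 ω = 0)
    (hzrec : ∀ k ω, z (k + 1) ω = A *ᵥ z k ω + w k ω)
    (hcb : ∀ k, LoeLE
      (A * covE μ (z k) (w k) + covE μ (w k) (z k) * Aᵀ + covE μ (w k) (w k)) Γw)
    (Γ : ℕ → Matrix (Fin n) (Fin n) ℝ)
    (hΓ0 : Γ 0 = 0) (hΓrec : ∀ k, Γ (k + 1) = A * Γ k * Aᵀ + Γw)
    (hΓpsd : ∀ k, (Γ k).PosSemidef)
    (r : ℝ) (hr : 0 < r)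
    (R : ℕ → Set (Fin n → ℝ))
    (hR0 : R 0 = {0})
    (hRrec : ∀ k, R (k + 1) = (A *ᵥ ·) '' R k + ball Γw hΓw.posSemidef r) :
    ∀ k, 1 ≤ k → ball (Γ k) (hΓpsd k) r ⊆ R k := by
  exact stmt8_main A Γw hΓw Γ hΓ0 hΓrec hΓpsd r hr R hR0 hRrec
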